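/- Let A and B be finite-dimensional k-algebras, X a nonzero finitely generated left A-module and Y a nonzero finitely generated left B-module. Then X ⊗_k Y is a torsionless (A ⊗_k B)-module if and only if X is a torsionless A-module and Y is a torsionless B-module. -/

import Mathlib

universe u
open TensorProduct

section Dual
variable (R : Type u) [Ring R] (M : Type u) [AddCommGroup M] [Module R M]

/-- The canonical evaluation map `φ_M : M → M** = Hom_{R^op}(Hom_R(M, R), R)`,
sending `m` to `f ↦ f m`. -/
noncomputable def evalDD : M →ₗ[R] ((M →ₗ[R] R) →ₗ[Rᵐᵒᵖ] R) where
  toFun m :=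
    { toFun := fun f => f m
      map_add' := fun f g => rfl
      map_smul' := fun a f => rfl }
  map_add' m m' := by ext f; simp
  map_smul' a m := by ext f; simp

/-- `M` is torsionless if the canonical map `φ_M : M → M**` is injective. -/
def IsTorsionless : Prop := Function.Injective (evalDD R M)

/-- `M` is reflexive if the canonical map `φ_M : M → M**` is bijective. -/
def IsReflexiveModule : Prop := Function.Bijective (evalDD R M)
end Dual


section TensorMod
variable (k : Type u) [Field k] (A B : Type u) [Ring A] [Ring B] [Algebra k A] [Algebra k B]
variable (M : Type u) [AddCommGroup M] [Module k M] [Module A M] [IsScalarTower k A M]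
variable (X : Type u) [AddCommGroup X] [Module k X] [Module B X] [IsScalarTower k B X]

/-- The action of `A` on `M ⊗[k] X` through the first factor, as an algebra map. -/
noncomputable def TensorMod.rhoA : A →ₐ[k] Module.End k (M ⊗[k] X) where
  toFun a := LinearMap.rTensor X (DistribSMul.toLinearMap k M a)
  map_one' := TensorProduct.ext' fun m x => by simp
  map_mul' a a' := TensorProduct.ext' fun m x => by simp [mul_smul]
  map_zero' := TensorProduct.ext' fun m x => by simp
  map_add' a a' := TensorProduct.ext' fun m x => by simp [add_smul, add_tmul]
  commutes' c := TensorProduct.ext' fun m x => by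
    simp [Module.algebraMap_end_apply, algebraMap_smul, smul_tmul']

/-- The action of `B` on `M ⊗[k] X` through the second factor, as an algebra map. -/
noncomputable def TensorMod.rhoB : B →ₐ[k] Module.End k (M ⊗[k] X) where
  toFun b := LinearMap.lTensor M (DistribSMul.toLinearMap k X b)
  map_one' := TensorProduct.ext' fun m x => by simp
  map_mul' b b' := TensorProduct.ext' fun m x => by simp [mul_smul]
  map_zero' := TensorProduct.ext' fun m x => by simp
  map_add' b b' := TensorProduct.ext' fun m x => by simp [add_smul, tmul_add]
  commutes' c := TensorProduct.ext' fun m x => by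
    simp [Module.algebraMap_end_apply, algebraMap_smul, tmul_smul]

/-- The algebra map `A ⊗[k] B → End(M ⊗[k] X)` defining the module structure of the
tensor product of modules over the tensor product of algebras. -/
noncomputable def TensorMod.rho : (A ⊗[k] B) →ₐ[k] Module.End k (M ⊗[k] X) :=
  Algebra.TensorProduct.lift (TensorMod.rhoA k A M X) (TensorMod.rhoB k B M X)
    (fun a b => LinearMap.ext <| fun z => by
      refine z.induction_on ?_ (fun m x => ?_) (fun y z hy hz => ?_)
      · simp
      · show (TensorMod.rhoA k A M X a) ((TensorMod.rhoB k B M X b) (m ⊗ₜ[k] x)) =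
          (TensorMod.rhoB k B M X b) ((TensorMod.rhoA k A M X a) (m ⊗ₜ[k] x))
        simp [TensorMod.rhoA, TensorMod.rhoB]
      · show (TensorMod.rhoA k A M X a) ((TensorMod.rhoB k B M X b) (y + z)) =
          (TensorMod.rhoB k B M X b) ((TensorMod.rhoA k A M X a) (y + z))
        simp only [map_add]
        exact congrArg₂ (· + ·) hy hz)

/-- The `A ⊗[k] B`-module structure on `M ⊗[k] X`. -/
noncomputable instance TensorMod.module : Module (A ⊗[k] B) (M ⊗[k] X) :=
  Module.compHom _ (TensorMod.rho k A B M X).toRingHom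

lemma TensorMod.tsmul_tmul (a : A) (b : B) (m : M) (x : X) :
    (a ⊗ₜ[k] b) • (m ⊗ₜ[k] x) = (a • m) ⊗ₜ[k] (b • x) := by
  show (TensorMod.rho k A B M X (a ⊗ₜ[k] b)) (m ⊗ₜ[k] x) = _
  simp [TensorMod.rho, TensorMod.rhoA, TensorMod.rhoB]

instance TensorMod.smulCommClassK :
    SMulCommClass (A ⊗[k] B) k (M ⊗[k] X) where
  smul_comm r c z := by
    show (TensorMod.rho k A B M X r) (c • z) = c • (TensorMod.rho k A B M X r) z
    rw [map_smul]
end TensorMod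


attribute [instance 2000] Semiring.toModule

section Aux

lemma isTorsionless_iff (R : Type u) [Ring R] (M : Type u) [AddCommGroup M] [Module R M] :
    IsTorsionless R M ↔ ∀ m : M, (∀ f : M →ₗ[R] R, f m = 0) → m = 0 := by
  rw [IsTorsionless, injective_iff_map_eq_zero]
  refine forall_congr' fun m => ?_
  constructor
  · intro h hm
    apply h
    ext f
    exact hm f
  · intro h hm
    refine h fun f => ?_
    exact DFunLike.congr_fun hm f

lemma tpmap_zero_left {R M N P Q : Type u} [CommRing R] [AddCommGroup M] [AddCommGroup N]
    [AddCommGroup P] [AddCommGroup Q] [Module R M] [Module R N] [Module R P] [Module R Q]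
    (g : N →ₗ[R] Q) : TensorProduct.map (0 : M →ₗ[R] P) g = 0 :=
  TensorProduct.ext' fun m n => by simp

lemma tpmap_zero_right {R M N P Q : Type u} [CommRing R] [AddCommGroup M] [AddCommGroup N]
    [AddCommGroup P] [AddCommGroup Q] [Module R M] [Module R N] [Module R P] [Module R Q]
    (f : M →ₗ[R] P) : TensorProduct.map f (0 : N →ₗ[R] Q) = 0 :=
  TensorProduct.ext' fun m n => by simp

/-- Pure tensors of dual functionals jointly separate points of a tensor product of
vector spaces. -/
lemma sepTensor (k : Type u) [Field k] (V W : Type u) [AddCommGroup V] [AddCommGroup W]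
    [Module k V] [Module k W] (z : V ⊗[k] W)
    (h : ∀ (α : Module.Dual k V) (β : Module.Dual k W), TensorProduct.map α β z = 0) :
    z = 0 := by
  set bV := Module.Basis.ofVectorSpace k V
  set bW := Module.Basis.ofVectorSpace k W
  have comp : ∀ (i : _) (j : _) (t : V ⊗[k] W),
      (bV.tensorProduct bW).repr t (i, j)
        = TensorProduct.lid k k (TensorProduct.map (bV.coord i) (bW.coord j) t) := by
    intro i j t
    induction t using TensorProduct.induction_on with
    | zero => simp
    | tmul v w =>
      simp [Module.Basis.tensorProduct_repr_tmul_apply, Module.Basis.coord_apply, smul_eq_mul, mul_comm]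
    | add t1 t2 h1 h2 => simp [map_add, h1, h2]
  refine ((bV.tensorProduct bW).repr.map_eq_zero_iff).mp ?_
  ext ⟨i, j⟩
  rw [comp i j z, h, map_zero]
  simp

section TwoAlg

variable (k : Type u) [Field k] (A B : Type u) [Ring A] [Ring B] [Algebra k A] [Algebra k B]

/-- Separation of `A ⊗ B` by functionals of the form `id ⊗ φ`. -/
lemma ABsepB (w : A ⊗[k] B)
    (h : ∀ φ : Module.Dual k B, TensorProduct.map (LinearMap.id (R := k) (M := A)) φ w = 0) :
    w = 0 := by
  refine sepTensor k A B w fun α β => ?_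
  have : TensorProduct.map α β w
      = TensorProduct.map α LinearMap.id (TensorProduct.map LinearMap.id β w) := by
    rw [← LinearMap.comp_apply, ← TensorProduct.map_comp, LinearMap.comp_id, LinearMap.id_comp]
  rw [this, h β, map_zero]

/-- Separation of `A ⊗ B` by functionals of the form `φ ⊗ id`. -/
lemma ABsepA (w : A ⊗[k] B)
    (h : ∀ φ : Module.Dual k A, TensorProduct.map φ (LinearMap.id (R := k) (M := B)) w = 0) :
    w = 0 := by
  refine sepTensor k A B w fun α β => ?_
  have : TensorProduct.map α β w
      = TensorProduct.map LinearMap.id β (TensorProduct.map α LinearMap.id w) := by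
    rw [← LinearMap.comp_apply, ← TensorProduct.map_comp, LinearMap.comp_id, LinearMap.id_comp]
  rw [this, h α, map_zero]

lemma ridMapMul (φ : Module.Dual k B) (a : A) (w : A ⊗[k] B) :
    TensorProduct.rid k A (TensorProduct.map LinearMap.id φ ((a ⊗ₜ[k] (1 : B)) * w))
      = a * TensorProduct.rid k A (TensorProduct.map LinearMap.id φ w) := by
  induction w using TensorProduct.induction_on with
  | zero => simp
  | tmul c d =>
    simp [Algebra.TensorProduct.tmul_mul_tmul, TensorProduct.rid_tmul, mul_smul_comm]
  | add w1 w2 h1 h2 => rw [mul_add, map_add, map_add, map_add, map_add, h1, h2, mul_add]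

lemma lidMapMul (φ : Module.Dual k A) (b : B) (w : A ⊗[k] B) :
    TensorProduct.lid k B (TensorProduct.map φ LinearMap.id (((1 : A) ⊗ₜ[k] b) * w))
      = b * TensorProduct.lid k B (TensorProduct.map φ LinearMap.id w) := by
  induction w using TensorProduct.induction_on with
  | zero => simp
  | tmul c d =>
    simp [Algebra.TensorProduct.tmul_mul_tmul, TensorProduct.lid_tmul, mul_smul_comm]
  | add w1 w2 h1 h2 => rw [mul_add, map_add, map_add, map_add, map_add, h1, h2, mul_add]

variable (X : Type u) [AddCommGroup X] [Module k X] [Module A X] [IsScalarTower k A X]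
variable (Y : Type u) [AddCommGroup Y] [Module k Y] [Module B Y] [IsScalarTower k B Y]

lemma map_smul_compat (f : X →ₗ[A] A) (g : Y →ₗ[B] B) (r : A ⊗[k] B) (z : X ⊗[k] Y) :
    TensorProduct.map (f.restrictScalars k) (g.restrictScalars k) (r • z)
      = r * TensorProduct.map (f.restrictScalars k) (g.restrictScalars k) z := by
  induction r using TensorProduct.induction_on with
  | zero => rw [zero_smul, zero_mul, map_zero]
  | tmul a b =>
    induction z using TensorProduct.induction_on with
    | zero => rw [smul_zero, map_zero, mul_zero]
    | tmul x y =>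
      rw [TensorMod.tsmul_tmul]
      simp [Algebra.TensorProduct.tmul_mul_tmul, smul_eq_mul]
    | add z1 z2 h1 h2 => rw [smul_add, map_add, map_add, mul_add, h1, h2]
  | add r1 r2 h1 h2 => rw [add_smul, add_mul, map_add, h1, h2]

end TwoAlg

/-- For a torsionless module over a finite-dimensional algebra, functionals of the form
`l ∘ f` with `f` an `A`-linear functional and `l` a `k`-linear functional span the
`k`-linear dual. -/
lemma span_comp_eq_top (k : Type u) [Field k] (A : Type u) [Ring A] [Algebra k A]
    (X : Type u) [AddCommGroup X] [Module k X] [Module A X] [IsScalarTower k A X]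
    [FiniteDimensional k X]
    (hX : ∀ x : X, (∀ f : X →ₗ[A] A, f x = 0) → x = 0) :
    Submodule.span k {α : Module.Dual k X |
      ∃ (f : X →ₗ[A] A) (l : Module.Dual k A), α = l ∘ₗ (f.restrictScalars k)} = ⊤ := by
  set S := Submodule.span k {α : Module.Dual k X |
      ∃ (f : X →ₗ[A] A) (l : Module.Dual k A), α = l ∘ₗ (f.restrictScalars k)} with hSdef
  have hco : S.dualCoannihilator = ⊥ := by
    rw [Submodule.eq_bot_iff]
    intro x hx
    rw [Submodule.mem_dualCoannihilator] at hx
    apply hX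
    intro f
    rw [← Module.forall_dual_apply_eq_zero_iff k (f x)]
    intro l
    exact hx _ (Submodule.subset_span ⟨f, l, rfl⟩)
  have h2 := Subspace.dualCoannihilator_dualAnnihilator_eq (W := S)
  rw [hco, Submodule.dualAnnihilator_bot] at h2
  exact h2.symm

end Aux

/-- For nonzero finitely generated modules `X` over `A` and `Y` over `B`, the
`(A ⊗ B)`-module `X ⊗_k Y` is torsionless if and only if `X` and `Y` are torsionless. -/
theorem stmt7 (k : Type u) [Field k] (A B : Type u) [Ring A] [Ring B] [Algebra k A]
    [Algebra k B] [FiniteDimensional k A] [FiniteDimensional k B]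
    (X : Type u) [AddCommGroup X] [Module k X] [Module A X] [IsScalarTower k A X]
    [Module.Finite A X] [Nontrivial X]
    (Y : Type u) [AddCommGroup Y] [Module k Y] [Module B Y] [IsScalarTower k B Y]
    [Module.Finite B Y] [Nontrivial Y] :
    IsTorsionless (A ⊗[k] B) (X ⊗[k] Y) ↔ IsTorsionless A X ∧ IsTorsionless B Y := by
  rw [isTorsionless_iff, isTorsionless_iff, isTorsionless_iff]
  constructor
  · intro H
    constructor
    · -- X is torsionless
      intro x hx
      obtain ⟨y₀, hy₀⟩ := exists_ne (0 : Y)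
      have hxy : x ⊗ₜ[k] y₀ = 0 := by
        apply H
        intro F
        refine ABsepB k A B _ fun φ => ?_
        rw [← LinearEquiv.map_eq_zero_iff (TensorProduct.rid k A)]
        exact hx
          { toFun := fun x' =>
              TensorProduct.rid k A (TensorProduct.map LinearMap.id φ (F (x' ⊗ₜ[k] y₀)))
            map_add' := fun x1 x2 => by simp only [TensorProduct.add_tmul, map_add]
            map_smul' := fun a x' => by
              show TensorProduct.rid k A (TensorProduct.map LinearMap.id φ (F ((a • x') ⊗ₜ[k] y₀)))
                  = a * TensorProduct.rid k A (TensorProduct.map LinearMap.id φ (F (x' ⊗ₜ[k] y₀)))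
              have h1 : (a • x') ⊗ₜ[k] y₀ = (a ⊗ₜ[k] (1 : B)) • (x' ⊗ₜ[k] y₀) := by
                rw [TensorMod.tsmul_tmul, one_smul]
              rw [h1, F.map_smul]
              exact ridMapMul k A B φ a (F (x' ⊗ₜ[k] y₀)) }
      have hβ : ∃ β : Module.Dual k Y, β y₀ ≠ 0 := by
        by_contra hc
        push_neg at hc
        exact hy₀ ((Module.forall_dual_apply_eq_zero_iff k y₀).mp hc)
      obtain ⟨β, hβ⟩ := hβ
      rw [← Module.forall_dual_apply_eq_zero_iff k x]
      intro α
      have h3 : TensorProduct.map α β (x ⊗ₜ[k] y₀) = 0 := by rw [hxy, map_zero]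
      rw [TensorProduct.map_tmul] at h3
      have h4 := congrArg (TensorProduct.lid k k) h3
      rw [TensorProduct.lid_tmul, map_zero, smul_eq_zero] at h4
      exact h4.resolve_right hβ
    · -- Y is torsionless
      intro y hy
      obtain ⟨x₀, hx₀⟩ := exists_ne (0 : X)
      have hxy : x₀ ⊗ₜ[k] y = 0 := by
        apply H
        intro F
        refine ABsepA k A B _ fun φ => ?_
        rw [← LinearEquiv.map_eq_zero_iff (TensorProduct.lid k B)]
        exact hy
          { toFun := fun y' =>
              TensorProduct.lid k B (TensorProduct.map φ LinearMap.id (F (x₀ ⊗ₜ[k] y')))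
            map_add' := fun y1 y2 => by simp only [TensorProduct.tmul_add, map_add]
            map_smul' := fun b y' => by
              show TensorProduct.lid k B (TensorProduct.map φ LinearMap.id (F (x₀ ⊗ₜ[k] (b • y'))))
                  = b * TensorProduct.lid k B (TensorProduct.map φ LinearMap.id (F (x₀ ⊗ₜ[k] y')))
              have h1 : x₀ ⊗ₜ[k] (b • y') = ((1 : A) ⊗ₜ[k] b) • (x₀ ⊗ₜ[k] y') := by
                rw [TensorMod.tsmul_tmul, one_smul]
              rw [h1, F.map_smul]
              exact lidMapMul k A B φ b (F (x₀ ⊗ₜ[k] y')) }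
      have hα : ∃ α : Module.Dual k X, α x₀ ≠ 0 := by
        by_contra hc
        push_neg at hc
        exact hx₀ ((Module.forall_dual_apply_eq_zero_iff k x₀).mp hc)
      obtain ⟨α, hα⟩ := hα
      rw [← Module.forall_dual_apply_eq_zero_iff k y]
      intro β
      have h3 : TensorProduct.map α β (x₀ ⊗ₜ[k] y) = 0 := by rw [hxy, map_zero]
      rw [TensorProduct.map_tmul] at h3
      have h4 := congrArg (TensorProduct.lid k k) h3
      rw [TensorProduct.lid_tmul, map_zero, smul_eq_zero] at h4
      exact h4.resolve_left hα
  · rintro ⟨hX, hY⟩ z hz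
    have h1 : ∀ (f : X →ₗ[A] A) (g : Y →ₗ[B] B),
        TensorProduct.map (f.restrictScalars k) (g.restrictScalars k) z = 0 := by
      intro f g
      exact hz
        { toFun := TensorProduct.map (f.restrictScalars k) (g.restrictScalars k)
          map_add' := fun t1 t2 => map_add _ t1 t2
          map_smul' := fun r t => map_smul_compat k A B X Y f g r t }
    haveI : FiniteDimensional k X := Module.Finite.trans A X
    haveI : FiniteDimensional k Y := Module.Finite.trans B Y
    have hSX := span_comp_eq_top k A X hX
    have hSY := span_comp_eq_top k B Y hY
    have h2 : ∀ (α : Module.Dual k X) (β : Module.Dual k Y), TensorProduct.map α β z = 0 := by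
      intro α β
      have hα : α ∈ Submodule.span k {α : Module.Dual k X |
          ∃ (f : X →ₗ[A] A) (l : Module.Dual k A), α = l ∘ₗ (f.restrictScalars k)} := by
        rw [hSX]; trivial
      have hβ : β ∈ Submodule.span k {β : Module.Dual k Y |
          ∃ (g : Y →ₗ[B] B) (m : Module.Dual k B), β = m ∘ₗ (g.restrictScalars k)} := by
        rw [hSY]; trivial
      refine Submodule.span_induction
        (p := fun α _ => TensorProduct.map α β z = 0) ?_ ?_ ?_ ?_ hα
      · rintro α' ⟨f, l, rfl⟩
        refine Submodule.span_induction
          (p := fun β _ => TensorProduct.map (l ∘ₗ f.restrictScalars k) β z = 0) ?_ ?_ ?_ ?_ hβ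
        · rintro β' ⟨g, m, rfl⟩
          show TensorProduct.map (l ∘ₗ f.restrictScalars k) (m ∘ₗ g.restrictScalars k) z = 0
          rw [TensorProduct.map_comp, LinearMap.comp_apply, h1 f g, map_zero]
        · simp only [tpmap_zero_right, LinearMap.zero_apply]
        · intro b1 b2 _ _ ih1 ih2
          simp only [TensorProduct.map_add_right, LinearMap.add_apply, ih1, ih2, add_zero]
        · intro c b1 _ ih
          simp only [TensorProduct.map_smul_right, LinearMap.smul_apply, ih, smul_zero]
      · simp only [tpmap_zero_left, LinearMap.zero_apply]
      · intro a1 a2 _ _ ih1 ih2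
        simp only [TensorProduct.map_add_left, LinearMap.add_apply, ih1, ih2, add_zero]
      · intro c a1 _ ih
        simp only [TensorProduct.map_smul_left, LinearMap.smul_apply, ih, smul_zero]
    exact sepTensor k X Y z h2
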